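/- Assume the framework (ℋ1)–(ℋ3). Then for all t ∈ [0, ∞): (2R(t) − √3 + 2√3 ℳ(L_{π/3}^-(t)))/(2 − √3) ≤ ℳ(L_{π/3}^+(t)) ≤ (2R(t) + √3 + (2 − √3) ℳ(L_{π/3}^-(t)))/(2√3). -/

import Mathlib

open MeasureTheory Filter

/-- Mass of the arc `L_γ^+(t) = (φ(t) − π/2 + γ, φ(t) + π/2 − γ)` for the kinetic
density `f`: `ℳ(L_γ^+(t)) = ∬_{L_γ^+(t)×ℝ} f dθ dω`. -/
noncomputable def massPlus (f : ℝ → ℝ → ℝ → ℝ) (φ : ℝ → ℝ) (γ t : ℝ) : ℝ :=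
  ∫ ω : ℝ, ∫ θ in (φ t - Real.pi / 2 + γ)..(φ t + Real.pi / 2 - γ), f θ ω t

/-- Mass of the arc `L_γ^-(t) = (φ(t) + π/2 + γ, φ(t) + 3π/2 − γ)` for the kinetic
density `f`: `ℳ(L_γ^-(t)) = ∬_{L_γ^-(t)×ℝ} f dθ dω`. -/
noncomputable def massMinus (f : ℝ → ℝ → ℝ → ℝ) (φ : ℝ → ℝ) (γ t : ℝ) : ℝ :=
  ∫ ω : ℝ, ∫ θ in (φ t + Real.pi / 2 + γ)..(φ t + 3 * Real.pi / 2 - γ), f θ ω t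

private lemma cosb1 {x : ℝ} (h1 : -(Real.pi/6) ≤ x) (h2 : x ≤ Real.pi/6) :
    Real.sqrt 3 / 2 ≤ Real.cos x := by
  rw [← Real.cos_abs, ← Real.cos_pi_div_six]
  exact Real.cos_le_cos_of_nonneg_of_le_pi (abs_nonneg x)
    (by linarith [Real.pi_pos]) (abs_le.2 ⟨h1, h2⟩)

private lemma cosb2 {x : ℝ} (h1 : Real.pi/6 ≤ x) (h2 : x ≤ 5*Real.pi/6) :
    |Real.cos x| ≤ Real.sqrt 3 / 2 := by
  have pi_pos := Real.pi_pos
  rw [abs_le]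
  constructor
  · have h := Real.cos_le_cos_of_nonneg_of_le_pi (x := Real.pi/6) (y := Real.pi - x)
      (by linarith) (by linarith) (by linarith)
    rw [Real.cos_pi_sub, Real.cos_pi_div_six] at h
    linarith
  · have h := Real.cos_le_cos_of_nonneg_of_le_pi (x := Real.pi/6) (y := x)
      (by linarith) (by linarith) h1
    rw [Real.cos_pi_div_six] at h
    exact h

private lemma cosb3 {x : ℝ} (h1 : 5*Real.pi/6 ≤ x) (h2 : x ≤ 7*Real.pi/6) :
    Real.cos x ≤ -(Real.sqrt 3 / 2) := by
  have h := cosb1 (x := Real.pi - x) (by linarith) (by linarith)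
  rw [Real.cos_pi_sub] at h
  linarith

private lemma cosb4 {x : ℝ} (h1 : 7*Real.pi/6 ≤ x) (h2 : x ≤ 11*Real.pi/6) :
    |Real.cos x| ≤ Real.sqrt 3 / 2 := by
  have h := cosb2 (x := 2*Real.pi - x) (by linarith) (by linarith)
  rwa [Real.cos_two_pi_sub] at h

/-- Main work lemma: only uses the relevant hypotheses. -/
private lemma core
    (f : ℝ → ℝ → ℝ → ℝ) (g : ℝ → ℝ) (R φ : ℝ → ℝ) (M : ℝ)
    (hreg : ContDiff ℝ 1 (fun p : ℝ × ℝ × ℝ => f p.1 p.2.1 p.2.2))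
    (hper : ∀ θ ω t, f (θ + 2 * Real.pi) ω t = f θ ω t)
    (hpos : ∀ θ ω t, 0 ≤ f θ ω t)
    (hprob : ∀ t, (∫ ω : ℝ, ∫ θ in (0 : ℝ)..(2 * Real.pi), f θ ω t) = 1)
    (hgdef : ∀ ω t, (∫ θ in (0 : ℝ)..(2 * Real.pi), f θ ω t) = g ω)
    (hRcos : ∀ t, R t * Real.cos (φ t)
      = ∫ ω : ℝ, ∫ θ in (0 : ℝ)..(2 * Real.pi), Real.cos θ * f θ ω t)
    (hRsin : ∀ t, R t * Real.sin (φ t)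
      = ∫ ω : ℝ, ∫ θ in (0 : ℝ)..(2 * Real.pi), Real.sin θ * f θ ω t)
    (hsupp : ∀ ω, ω ∉ Set.Icc (-M) M → g ω = 0)
    (t : ℝ) :
      (2 * R t - Real.sqrt 3 + 2 * Real.sqrt 3 * massMinus f φ (Real.pi / 3) t)
          / (2 - Real.sqrt 3)
        ≤ massPlus f φ (Real.pi / 3) t ∧
      massPlus f φ (Real.pi / 3) t
        ≤ (2 * R t + Real.sqrt 3 + (2 - Real.sqrt 3) * massMinus f φ (Real.pi / 3) t)
          / (2 * Real.sqrt 3) := by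
  have pi_pos := Real.pi_pos
  set c := φ t with hc
  -- continuity facts
  have hfc : Continuous fun p : ℝ × ℝ => f p.1 p.2 t :=
    hreg.continuous.comp (continuous_fst.prodMk (continuous_snd.prodMk continuous_const))
  have hfθ : ∀ ω, Continuous fun θ => f θ ω t :=
    fun ω => hfc.comp (continuous_id.prodMk continuous_const)
  -- g facts
  have hgc : Continuous g := by
    have h : Continuous fun ω : ℝ => ∫ θ in (0:ℝ)..(2*Real.pi), f θ ω t :=
      intervalIntegral.continuous_parametric_intervalIntegral_of_continuous'
        (f := fun ω θ => f θ ω t)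
        (hfc.comp (continuous_snd.prodMk continuous_fst)) 0 (2*Real.pi)
    simpa only [hgdef] using h
  have hgint : Integrable g :=
    hgc.integrable_of_hasCompactSupport (HasCompactSupport.intro isCompact_Icc hsupp)
  have hperf : ∀ ω, Function.Periodic (fun θ => f θ ω t) (2*Real.pi) :=
    fun ω x => hper x ω t
  -- master slice lemma
  have key : ∀ w : ℝ → ℝ, Continuous w → (∀ x, |w x| ≤ 1) →
      ∀ a b : ℝ, a ≤ b → b ≤ a + 2*Real.pi →
      (∀ ω, |∫ θ in a..b, w θ * f θ ω t| ≤ g ω) ∧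
      Integrable (fun ω => ∫ θ in a..b, w θ * f θ ω t) := by
    intro w hw hw1 a b hab hb
    have hbd : ∀ ω, |∫ θ in a..b, w θ * f θ ω t| ≤ g ω := by
      intro ω
      have h1 : |∫ θ in a..b, w θ * f θ ω t| ≤ ∫ θ in a..b, |w θ * f θ ω t| :=
        intervalIntegral.abs_integral_le_integral_abs hab
      have h2 : (∫ θ in a..b, |w θ * f θ ω t|) ≤ ∫ θ in a..b, f θ ω t := by
        apply intervalIntegral.integral_mono_on hab
          ((hw.mul (hfθ ω)).abs.intervalIntegrable a b) ((hfθ ω).intervalIntegrable a b)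
        intro x _
        simp only [Pi.mul_apply, abs_mul, abs_of_nonneg (hpos x ω t)]
        exact mul_le_of_le_one_left (hpos x ω t) (hw1 x)
      have h3 : (∫ θ in a..b, f θ ω t) ≤ ∫ θ in a..(a + 2*Real.pi), f θ ω t := by
        rw [← intervalIntegral.integral_add_adjacent_intervals
          ((hfθ ω).intervalIntegrable a b) ((hfθ ω).intervalIntegrable b (a+2*Real.pi))]
        have h0 : 0 ≤ ∫ θ in b..(a+2*Real.pi), f θ ω t :=
          intervalIntegral.integral_nonneg hb (fun x _ => hpos x ω t)
        linarith
      have h4 : (∫ θ in a..(a+2*Real.pi), f θ ω t) = g ω := by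
        rw [(hperf ω).intervalIntegral_add_eq a 0]
        simpa using hgdef ω t
      linarith
    refine ⟨hbd, ?_⟩
    have hcont : Continuous fun ω => ∫ θ in a..b, w θ * f θ ω t :=
      intervalIntegral.continuous_parametric_intervalIntegral_of_continuous'
        (f := fun ω θ => w θ * f θ ω t)
        ((hw.comp continuous_snd).mul (hfc.comp (continuous_snd.prodMk continuous_fst))) a b
    exact hgint.mono' hcont.aestronglyMeasurable
      (ae_of_all _ fun ω => by rw [Real.norm_eq_abs]; exact hbd ω)
  -- weight function
  have hwcos : Continuous fun θ : ℝ => Real.cos (θ - c) :=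
    Real.continuous_cos.comp (continuous_id.sub continuous_const)
  have hwcos1 : ∀ x : ℝ, |Real.cos (x - c)| ≤ 1 := fun x => Real.abs_cos_le_one _
  have hone1 : ∀ x : ℝ, |(1:ℝ)| ≤ 1 := fun _ => by norm_num
  -- the four intervals: endpoints
  -- [c-π/6, c+π/6], [c+π/6, c+5π/6], [c+5π/6, c+7π/6], [c+7π/6, c-π/6+2π]
  obtain ⟨_, hF1i'⟩ := key (fun _ => (1:ℝ)) continuous_const hone1
    (c - Real.pi/6) (c + Real.pi/6) (by linarith) (by linarith)
  obtain ⟨_, hF2i'⟩ := key (fun _ => (1:ℝ)) continuous_const hone1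
    (c + Real.pi/6) (c + 5*Real.pi/6) (by linarith) (by linarith)
  obtain ⟨_, hF3i'⟩ := key (fun _ => (1:ℝ)) continuous_const hone1
    (c + 5*Real.pi/6) (c + 7*Real.pi/6) (by linarith) (by linarith)
  obtain ⟨_, hF4i'⟩ := key (fun _ => (1:ℝ)) continuous_const hone1
    (c + 7*Real.pi/6) (c - Real.pi/6 + 2*Real.pi) (by linarith) (by linarith)
  have hF1i : Integrable (fun ω => ∫ θ in (c - Real.pi/6)..(c + Real.pi/6), f θ ω t) := by
    simpa only [one_mul] using hF1i'
  have hF2i : Integrable (fun ω => ∫ θ in (c + Real.pi/6)..(c + 5*Real.pi/6), f θ ω t) := by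
    simpa only [one_mul] using hF2i'
  have hF3i : Integrable (fun ω => ∫ θ in (c + 5*Real.pi/6)..(c + 7*Real.pi/6), f θ ω t) := by
    simpa only [one_mul] using hF3i'
  have hF4i : Integrable (fun ω => ∫ θ in (c + 7*Real.pi/6)..(c - Real.pi/6 + 2*Real.pi), f θ ω t) := by
    simpa only [one_mul] using hF4i'
  obtain ⟨_, hG1i⟩ := key (fun θ => Real.cos (θ - c)) hwcos hwcos1
    (c - Real.pi/6) (c + Real.pi/6) (by linarith) (by linarith)
  obtain ⟨_, hG2i⟩ := key (fun θ => Real.cos (θ - c)) hwcos hwcos1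
    (c + Real.pi/6) (c + 5*Real.pi/6) (by linarith) (by linarith)
  obtain ⟨_, hG3i⟩ := key (fun θ => Real.cos (θ - c)) hwcos hwcos1
    (c + 5*Real.pi/6) (c + 7*Real.pi/6) (by linarith) (by linarith)
  obtain ⟨_, hG4i⟩ := key (fun θ => Real.cos (θ - c)) hwcos hwcos1
    (c + 7*Real.pi/6) (c - Real.pi/6 + 2*Real.pi) (by linarith) (by linarith)
  obtain ⟨_, hAi⟩ := key Real.cos Real.continuous_cos (fun x => Real.abs_cos_le_one x)
    0 (2*Real.pi) (by linarith) (by linarith)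
  obtain ⟨_, hBi⟩ := key Real.sin Real.continuous_sin (fun x => Real.abs_sin_le_one x)
    0 (2*Real.pi) (by linarith) (by linarith)
  
  -- interval integrability shortcut for the cosine-weighted integrand
  have ii : ∀ (ω u v : ℝ), IntervalIntegrable (fun θ => Real.cos (θ - c) * f θ ω t) volume u v :=
    fun ω u v => (hwcos.mul (hfθ ω)).intervalIntegrable u v
  have iif : ∀ (ω u v : ℝ), IntervalIntegrable (fun θ => f θ ω t) volume u v :=
    fun ω u v => (hfθ ω).intervalIntegrable u v
  -- pointwise bounds on slices
  have h1u : ∀ ω, (∫ θ in (c - Real.pi/6)..(c + Real.pi/6), Real.cos (θ - c) * f θ ω t)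
      ≤ ∫ θ in (c - Real.pi/6)..(c + Real.pi/6), f θ ω t := by
    intro ω
    apply intervalIntegral.integral_mono_on (by linarith) (ii ω _ _) (iif ω _ _)
    intro x _
    exact mul_le_of_le_one_left (hpos x ω t) (Real.cos_le_one _)
  have h1l : ∀ ω, Real.sqrt 3 / 2 * (∫ θ in (c - Real.pi/6)..(c + Real.pi/6), f θ ω t)
      ≤ ∫ θ in (c - Real.pi/6)..(c + Real.pi/6), Real.cos (θ - c) * f θ ω t := by
    intro ω
    rw [← intervalIntegral.integral_const_mul]
    apply intervalIntegral.integral_mono_on (by linarith)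
      ((continuous_const.mul (hfθ ω)).intervalIntegrable _ _) (ii ω _ _)
    intro x hx
    exact mul_le_mul_of_nonneg_right
      (cosb1 (by linarith [hx.1]) (by linarith [hx.2])) (hpos x ω t)
  have h2u : ∀ ω, (∫ θ in (c + Real.pi/6)..(c + 5*Real.pi/6), Real.cos (θ - c) * f θ ω t)
      ≤ Real.sqrt 3 / 2 * ∫ θ in (c + Real.pi/6)..(c + 5*Real.pi/6), f θ ω t := by
    intro ω
    rw [← intervalIntegral.integral_const_mul]
    apply intervalIntegral.integral_mono_on (by linarith) (ii ω _ _)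
      ((continuous_const.mul (hfθ ω)).intervalIntegrable _ _)
    intro x hx
    exact mul_le_mul_of_nonneg_right
      ((abs_le.1 (cosb2 (by linarith [hx.1]) (by linarith [hx.2]))).2) (hpos x ω t)
  have h2l : ∀ ω, -(Real.sqrt 3 / 2) * (∫ θ in (c + Real.pi/6)..(c + 5*Real.pi/6), f θ ω t)
      ≤ ∫ θ in (c + Real.pi/6)..(c + 5*Real.pi/6), Real.cos (θ - c) * f θ ω t := by
    intro ω
    rw [← intervalIntegral.integral_const_mul]
    apply intervalIntegral.integral_mono_on (by linarith)
      ((continuous_const.mul (hfθ ω)).intervalIntegrable _ _) (ii ω _ _)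
    intro x hx
    exact mul_le_mul_of_nonneg_right
      ((abs_le.1 (cosb2 (by linarith [hx.1]) (by linarith [hx.2]))).1) (hpos x ω t)
  have h3u : ∀ ω, (∫ θ in (c + 5*Real.pi/6)..(c + 7*Real.pi/6), Real.cos (θ - c) * f θ ω t)
      ≤ -(Real.sqrt 3 / 2) * ∫ θ in (c + 5*Real.pi/6)..(c + 7*Real.pi/6), f θ ω t := by
    intro ω
    rw [← intervalIntegral.integral_const_mul]
    apply intervalIntegral.integral_mono_on (by linarith) (ii ω _ _)
      ((continuous_const.mul (hfθ ω)).intervalIntegrable _ _)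
    intro x hx
    exact mul_le_mul_of_nonneg_right
      (cosb3 (by linarith [hx.1]) (by linarith [hx.2])) (hpos x ω t)
  have h3l : ∀ ω, (-1 : ℝ) * (∫ θ in (c + 5*Real.pi/6)..(c + 7*Real.pi/6), f θ ω t)
      ≤ ∫ θ in (c + 5*Real.pi/6)..(c + 7*Real.pi/6), Real.cos (θ - c) * f θ ω t := by
    intro ω
    rw [← intervalIntegral.integral_const_mul]
    apply intervalIntegral.integral_mono_on (by linarith)
      ((continuous_const.mul (hfθ ω)).intervalIntegrable _ _) (ii ω _ _)
    intro x _
    exact mul_le_mul_of_nonneg_right (Real.neg_one_le_cos _) (hpos x ω t)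
  have h4u : ∀ ω, (∫ θ in (c + 7*Real.pi/6)..(c - Real.pi/6 + 2*Real.pi), Real.cos (θ - c) * f θ ω t)
      ≤ Real.sqrt 3 / 2 * ∫ θ in (c + 7*Real.pi/6)..(c - Real.pi/6 + 2*Real.pi), f θ ω t := by
    intro ω
    rw [← intervalIntegral.integral_const_mul]
    apply intervalIntegral.integral_mono_on (by linarith) (ii ω _ _)
      ((continuous_const.mul (hfθ ω)).intervalIntegrable _ _)
    intro x hx
    exact mul_le_mul_of_nonneg_right
      ((abs_le.1 (cosb4 (by linarith [hx.1]) (by linarith [hx.2]))).2) (hpos x ω t)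
  have h4l : ∀ ω, -(Real.sqrt 3 / 2) * (∫ θ in (c + 7*Real.pi/6)..(c - Real.pi/6 + 2*Real.pi), f θ ω t)
      ≤ ∫ θ in (c + 7*Real.pi/6)..(c - Real.pi/6 + 2*Real.pi), Real.cos (θ - c) * f θ ω t := by
    intro ω
    rw [← intervalIntegral.integral_const_mul]
    apply intervalIntegral.integral_mono_on (by linarith)
      ((continuous_const.mul (hfθ ω)).intervalIntegrable _ _) (ii ω _ _)
    intro x hx
    exact mul_le_mul_of_nonneg_right
      ((abs_le.1 (cosb4 (by linarith [hx.1]) (by linarith [hx.2]))).1) (hpos x ω t)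
  -- integrated bounds
  have hW1u : (∫ ω, ∫ θ in (c - Real.pi/6)..(c + Real.pi/6), Real.cos (θ - c) * f θ ω t)
      ≤ ∫ ω, ∫ θ in (c - Real.pi/6)..(c + Real.pi/6), f θ ω t :=
    integral_mono hG1i hF1i h1u
  have hW1l : Real.sqrt 3 / 2 * (∫ ω, ∫ θ in (c - Real.pi/6)..(c + Real.pi/6), f θ ω t)
      ≤ ∫ ω, ∫ θ in (c - Real.pi/6)..(c + Real.pi/6), Real.cos (θ - c) * f θ ω t := by
    have := integral_mono (hF1i.const_mul (Real.sqrt 3 / 2)) hG1i h1l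
    rwa [integral_const_mul] at this
  have hW2u : (∫ ω, ∫ θ in (c + Real.pi/6)..(c + 5*Real.pi/6), Real.cos (θ - c) * f θ ω t)
      ≤ Real.sqrt 3 / 2 * ∫ ω, ∫ θ in (c + Real.pi/6)..(c + 5*Real.pi/6), f θ ω t := by
    have := integral_mono hG2i (hF2i.const_mul (Real.sqrt 3 / 2)) h2u
    rwa [integral_const_mul] at this
  have hW2l : -(Real.sqrt 3 / 2) * (∫ ω, ∫ θ in (c + Real.pi/6)..(c + 5*Real.pi/6), f θ ω t)
      ≤ ∫ ω, ∫ θ in (c + Real.pi/6)..(c + 5*Real.pi/6), Real.cos (θ - c) * f θ ω t := by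
    have := integral_mono (hF2i.const_mul (-(Real.sqrt 3 / 2))) hG2i h2l
    rwa [integral_const_mul] at this
  have hW3u : (∫ ω, ∫ θ in (c + 5*Real.pi/6)..(c + 7*Real.pi/6), Real.cos (θ - c) * f θ ω t)
      ≤ -(Real.sqrt 3 / 2) * ∫ ω, ∫ θ in (c + 5*Real.pi/6)..(c + 7*Real.pi/6), f θ ω t := by
    have := integral_mono hG3i (hF3i.const_mul (-(Real.sqrt 3 / 2))) h3u
    rwa [integral_const_mul] at this
  have hW3l : (-1 : ℝ) * (∫ ω, ∫ θ in (c + 5*Real.pi/6)..(c + 7*Real.pi/6), f θ ω t)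
      ≤ ∫ ω, ∫ θ in (c + 5*Real.pi/6)..(c + 7*Real.pi/6), Real.cos (θ - c) * f θ ω t := by
    have := integral_mono (hF3i.const_mul (-1 : ℝ)) hG3i h3l
    rwa [integral_const_mul] at this
  have hW4u : (∫ ω, ∫ θ in (c + 7*Real.pi/6)..(c - Real.pi/6 + 2*Real.pi), Real.cos (θ - c) * f θ ω t)
      ≤ Real.sqrt 3 / 2 * ∫ ω, ∫ θ in (c + 7*Real.pi/6)..(c - Real.pi/6 + 2*Real.pi), f θ ω t := by
    have := integral_mono hG4i (hF4i.const_mul (Real.sqrt 3 / 2)) h4u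
    rwa [integral_const_mul] at this
  have hW4l : -(Real.sqrt 3 / 2) * (∫ ω, ∫ θ in (c + 7*Real.pi/6)..(c - Real.pi/6 + 2*Real.pi), f θ ω t)
      ≤ ∫ ω, ∫ θ in (c + 7*Real.pi/6)..(c - Real.pi/6 + 2*Real.pi), Real.cos (θ - c) * f θ ω t := by
    have := integral_mono (hF4i.const_mul (-(Real.sqrt 3 / 2))) hG4i h4l
    rwa [integral_const_mul] at this
  -- total mass is 1
  have hg1 : (∫ ω, g ω) = 1 := by
    have h := hprob t
    simpa only [hgdef] using h
  have hptF : ∀ ω, (∫ θ in (c - Real.pi/6)..(c + Real.pi/6), f θ ω t)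
      + (∫ θ in (c + Real.pi/6)..(c + 5*Real.pi/6), f θ ω t)
      + (∫ θ in (c + 5*Real.pi/6)..(c + 7*Real.pi/6), f θ ω t)
      + (∫ θ in (c + 7*Real.pi/6)..(c - Real.pi/6 + 2*Real.pi), f θ ω t) = g ω := by
    intro ω
    have i1 := intervalIntegral.integral_add_adjacent_intervals (iif ω (c - Real.pi/6) (c + Real.pi/6))
      (iif ω (c + Real.pi/6) (c + 5*Real.pi/6))
    have i2 := intervalIntegral.integral_add_adjacent_intervals (iif ω (c - Real.pi/6) (c + 5*Real.pi/6))
      (iif ω (c + 5*Real.pi/6) (c + 7*Real.pi/6))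
    have i3 := intervalIntegral.integral_add_adjacent_intervals (iif ω (c - Real.pi/6) (c + 7*Real.pi/6))
      (iif ω (c + 7*Real.pi/6) (c - Real.pi/6 + 2*Real.pi))
    have h4 : (∫ θ in (c - Real.pi/6)..(c - Real.pi/6 + 2*Real.pi), f θ ω t) = g ω := by
      rw [(hperf ω).intervalIntegral_add_eq (c - Real.pi/6) 0]
      simpa using hgdef ω t
    linarith
  have hMsum : (∫ ω, ∫ θ in (c - Real.pi/6)..(c + Real.pi/6), f θ ω t)
      + (∫ ω, ∫ θ in (c + Real.pi/6)..(c + 5*Real.pi/6), f θ ω t)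
      + (∫ ω, ∫ θ in (c + 5*Real.pi/6)..(c + 7*Real.pi/6), f θ ω t)
      + (∫ ω, ∫ θ in (c + 7*Real.pi/6)..(c - Real.pi/6 + 2*Real.pi), f θ ω t) = 1 := by
    have e : (∫ ω, ((∫ θ in (c - Real.pi/6)..(c + Real.pi/6), f θ ω t)
        + (∫ θ in (c + Real.pi/6)..(c + 5*Real.pi/6), f θ ω t)
        + (∫ θ in (c + 5*Real.pi/6)..(c + 7*Real.pi/6), f θ ω t)
        + (∫ θ in (c + 7*Real.pi/6)..(c - Real.pi/6 + 2*Real.pi), f θ ω t)))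
        = (∫ ω, ∫ θ in (c - Real.pi/6)..(c + Real.pi/6), f θ ω t)
        + (∫ ω, ∫ θ in (c + Real.pi/6)..(c + 5*Real.pi/6), f θ ω t)
        + (∫ ω, ∫ θ in (c + 5*Real.pi/6)..(c + 7*Real.pi/6), f θ ω t)
        + (∫ ω, ∫ θ in (c + 7*Real.pi/6)..(c - Real.pi/6 + 2*Real.pi), f θ ω t) := by
      have h12 : (∫ ω, ((∫ θ in (c - Real.pi/6)..(c + Real.pi/6), f θ ω t)
          + (∫ θ in (c + Real.pi/6)..(c + 5*Real.pi/6), f θ ω t)))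
          = (∫ ω, ∫ θ in (c - Real.pi/6)..(c + Real.pi/6), f θ ω t)
          + (∫ ω, ∫ θ in (c + Real.pi/6)..(c + 5*Real.pi/6), f θ ω t) :=
        integral_add hF1i hF2i
      have h123 : (∫ ω, ((∫ θ in (c - Real.pi/6)..(c + Real.pi/6), f θ ω t)
          + (∫ θ in (c + Real.pi/6)..(c + 5*Real.pi/6), f θ ω t)
          + (∫ θ in (c + 5*Real.pi/6)..(c + 7*Real.pi/6), f θ ω t)))
          = (∫ ω, ((∫ θ in (c - Real.pi/6)..(c + Real.pi/6), f θ ω t)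
            + (∫ θ in (c + Real.pi/6)..(c + 5*Real.pi/6), f θ ω t)))
          + (∫ ω, ∫ θ in (c + 5*Real.pi/6)..(c + 7*Real.pi/6), f θ ω t) :=
        integral_add (hF1i.add hF2i) hF3i
      have h1234 : (∫ ω, ((∫ θ in (c - Real.pi/6)..(c + Real.pi/6), f θ ω t)
          + (∫ θ in (c + Real.pi/6)..(c + 5*Real.pi/6), f θ ω t)
          + (∫ θ in (c + 5*Real.pi/6)..(c + 7*Real.pi/6), f θ ω t)
          + (∫ θ in (c + 7*Real.pi/6)..(c - Real.pi/6 + 2*Real.pi), f θ ω t)))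
          = (∫ ω, ((∫ θ in (c - Real.pi/6)..(c + Real.pi/6), f θ ω t)
            + (∫ θ in (c + Real.pi/6)..(c + 5*Real.pi/6), f θ ω t)
            + (∫ θ in (c + 5*Real.pi/6)..(c + 7*Real.pi/6), f θ ω t)))
          + (∫ ω, ∫ θ in (c + 7*Real.pi/6)..(c - Real.pi/6 + 2*Real.pi), f θ ω t) :=
        integral_add ((hF1i.add hF2i).add hF3i) hF4i
      rw [h1234, h123, h12]
    rw [← e]
    rw [show (fun ω => ((∫ θ in (c - Real.pi/6)..(c + Real.pi/6), f θ ω t)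
        + (∫ θ in (c + Real.pi/6)..(c + 5*Real.pi/6), f θ ω t)
        + (∫ θ in (c + 5*Real.pi/6)..(c + 7*Real.pi/6), f θ ω t)
        + (∫ θ in (c + 7*Real.pi/6)..(c - Real.pi/6 + 2*Real.pi), f θ ω t))) = g from funext hptF]
    exact hg1
  -- the order parameter identity
  have hptG : ∀ ω, (∫ θ in (c - Real.pi/6)..(c + Real.pi/6), Real.cos (θ - c) * f θ ω t)
      + (∫ θ in (c + Real.pi/6)..(c + 5*Real.pi/6), Real.cos (θ - c) * f θ ω t)
      + (∫ θ in (c + 5*Real.pi/6)..(c + 7*Real.pi/6), Real.cos (θ - c) * f θ ω t)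
      + (∫ θ in (c + 7*Real.pi/6)..(c - Real.pi/6 + 2*Real.pi), Real.cos (θ - c) * f θ ω t)
      = Real.cos c * (∫ θ in (0:ℝ)..(2*Real.pi), Real.cos θ * f θ ω t)
        + Real.sin c * (∫ θ in (0:ℝ)..(2*Real.pi), Real.sin θ * f θ ω t) := by
    intro ω
    have i1 := intervalIntegral.integral_add_adjacent_intervals (ii ω (c - Real.pi/6) (c + Real.pi/6))
      (ii ω (c + Real.pi/6) (c + 5*Real.pi/6))
    have i2 := intervalIntegral.integral_add_adjacent_intervals (ii ω (c - Real.pi/6) (c + 5*Real.pi/6))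
      (ii ω (c + 5*Real.pi/6) (c + 7*Real.pi/6))
    have i3 := intervalIntegral.integral_add_adjacent_intervals (ii ω (c - Real.pi/6) (c + 7*Real.pi/6))
      (ii ω (c + 7*Real.pi/6) (c - Real.pi/6 + 2*Real.pi))
    have hp : Function.Periodic (fun θ => Real.cos (θ - c) * f θ ω t) (2*Real.pi) := by
      intro x
      simp only
      rw [hper x ω t, show x + 2*Real.pi - c = x - c + 2*Real.pi from by ring, Real.cos_add_two_pi]
    have hshift : (∫ θ in (c - Real.pi/6)..(c - Real.pi/6 + 2*Real.pi), Real.cos (θ - c) * f θ ω t)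
        = ∫ θ in (0:ℝ)..(2*Real.pi), Real.cos (θ - c) * f θ ω t := by
      rw [hp.intervalIntegral_add_eq (c - Real.pi/6) 0, zero_add]
    have hexp : (∫ θ in (0:ℝ)..(2*Real.pi), Real.cos (θ - c) * f θ ω t)
        = Real.cos c * (∫ θ in (0:ℝ)..(2*Real.pi), Real.cos θ * f θ ω t)
          + Real.sin c * (∫ θ in (0:ℝ)..(2*Real.pi), Real.sin θ * f θ ω t) := by
      have hpt2 : ∀ x ∈ Set.uIcc (0:ℝ) (2*Real.pi), Real.cos (x - c) * f x ω t
          = Real.cos c * (Real.cos x * f x ω t) + Real.sin c * (Real.sin x * f x ω t) := by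
        intro x _
        rw [Real.cos_sub]
        ring
      rw [intervalIntegral.integral_congr hpt2,
        intervalIntegral.integral_add (f := fun x => Real.cos c * (Real.cos x * f x ω t))
          (g := fun x => Real.sin c * (Real.sin x * f x ω t))
          ((continuous_const.mul (Real.continuous_cos.mul (hfθ ω))).intervalIntegrable _ _)
          ((continuous_const.mul (Real.continuous_sin.mul (hfθ ω))).intervalIntegrable _ _),
        intervalIntegral.integral_const_mul, intervalIntegral.integral_const_mul]
    linarith
  have hAeq : (∫ ω, ∫ θ in (0:ℝ)..(2*Real.pi), Real.cos θ * f θ ω t) = R t * Real.cos c := by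
    have h := (hRcos t).symm
    rwa [← hc] at h
  have hBeq : (∫ ω, ∫ θ in (0:ℝ)..(2*Real.pi), Real.sin θ * f θ ω t) = R t * Real.sin c := by
    have h := (hRsin t).symm
    rwa [← hc] at h
  have hWsum : (∫ ω, ∫ θ in (c - Real.pi/6)..(c + Real.pi/6), Real.cos (θ - c) * f θ ω t)
      + (∫ ω, ∫ θ in (c + Real.pi/6)..(c + 5*Real.pi/6), Real.cos (θ - c) * f θ ω t)
      + (∫ ω, ∫ θ in (c + 5*Real.pi/6)..(c + 7*Real.pi/6), Real.cos (θ - c) * f θ ω t)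
      + (∫ ω, ∫ θ in (c + 7*Real.pi/6)..(c - Real.pi/6 + 2*Real.pi), Real.cos (θ - c) * f θ ω t)
      = R t := by
    have e : (∫ ω, ((∫ θ in (c - Real.pi/6)..(c + Real.pi/6), Real.cos (θ - c) * f θ ω t)
        + (∫ θ in (c + Real.pi/6)..(c + 5*Real.pi/6), Real.cos (θ - c) * f θ ω t)
        + (∫ θ in (c + 5*Real.pi/6)..(c + 7*Real.pi/6), Real.cos (θ - c) * f θ ω t)
        + (∫ θ in (c + 7*Real.pi/6)..(c - Real.pi/6 + 2*Real.pi), Real.cos (θ - c) * f θ ω t)))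
        = (∫ ω, ∫ θ in (c - Real.pi/6)..(c + Real.pi/6), Real.cos (θ - c) * f θ ω t)
        + (∫ ω, ∫ θ in (c + Real.pi/6)..(c + 5*Real.pi/6), Real.cos (θ - c) * f θ ω t)
        + (∫ ω, ∫ θ in (c + 5*Real.pi/6)..(c + 7*Real.pi/6), Real.cos (θ - c) * f θ ω t)
        + (∫ ω, ∫ θ in (c + 7*Real.pi/6)..(c - Real.pi/6 + 2*Real.pi), Real.cos (θ - c) * f θ ω t) := by
      have h12 : (∫ ω, ((∫ θ in (c - Real.pi/6)..(c + Real.pi/6), Real.cos (θ - c) * f θ ω t)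
          + (∫ θ in (c + Real.pi/6)..(c + 5*Real.pi/6), Real.cos (θ - c) * f θ ω t)))
          = (∫ ω, ∫ θ in (c - Real.pi/6)..(c + Real.pi/6), Real.cos (θ - c) * f θ ω t)
          + (∫ ω, ∫ θ in (c + Real.pi/6)..(c + 5*Real.pi/6), Real.cos (θ - c) * f θ ω t) :=
        integral_add hG1i hG2i
      have h123 : (∫ ω, ((∫ θ in (c - Real.pi/6)..(c + Real.pi/6), Real.cos (θ - c) * f θ ω t)
          + (∫ θ in (c + Real.pi/6)..(c + 5*Real.pi/6), Real.cos (θ - c) * f θ ω t)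
          + (∫ θ in (c + 5*Real.pi/6)..(c + 7*Real.pi/6), Real.cos (θ - c) * f θ ω t)))
          = (∫ ω, ((∫ θ in (c - Real.pi/6)..(c + Real.pi/6), Real.cos (θ - c) * f θ ω t)
            + (∫ θ in (c + Real.pi/6)..(c + 5*Real.pi/6), Real.cos (θ - c) * f θ ω t)))
          + (∫ ω, ∫ θ in (c + 5*Real.pi/6)..(c + 7*Real.pi/6), Real.cos (θ - c) * f θ ω t) :=
        integral_add (hG1i.add hG2i) hG3i
      have h1234 : (∫ ω, ((∫ θ in (c - Real.pi/6)..(c + Real.pi/6), Real.cos (θ - c) * f θ ω t)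
          + (∫ θ in (c + Real.pi/6)..(c + 5*Real.pi/6), Real.cos (θ - c) * f θ ω t)
          + (∫ θ in (c + 5*Real.pi/6)..(c + 7*Real.pi/6), Real.cos (θ - c) * f θ ω t)
          + (∫ θ in (c + 7*Real.pi/6)..(c - Real.pi/6 + 2*Real.pi), Real.cos (θ - c) * f θ ω t)))
          = (∫ ω, ((∫ θ in (c - Real.pi/6)..(c + Real.pi/6), Real.cos (θ - c) * f θ ω t)
            + (∫ θ in (c + Real.pi/6)..(c + 5*Real.pi/6), Real.cos (θ - c) * f θ ω t)
            + (∫ θ in (c + 5*Real.pi/6)..(c + 7*Real.pi/6), Real.cos (θ - c) * f θ ω t)))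
          + (∫ ω, ∫ θ in (c + 7*Real.pi/6)..(c - Real.pi/6 + 2*Real.pi), Real.cos (θ - c) * f θ ω t) :=
        integral_add ((hG1i.add hG2i).add hG3i) hG4i
      rw [h1234, h123, h12]
    rw [← e]
    rw [show (fun ω => ((∫ θ in (c - Real.pi/6)..(c + Real.pi/6), Real.cos (θ - c) * f θ ω t)
        + (∫ θ in (c + Real.pi/6)..(c + 5*Real.pi/6), Real.cos (θ - c) * f θ ω t)
        + (∫ θ in (c + 5*Real.pi/6)..(c + 7*Real.pi/6), Real.cos (θ - c) * f θ ω t)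
        + (∫ θ in (c + 7*Real.pi/6)..(c - Real.pi/6 + 2*Real.pi), Real.cos (θ - c) * f θ ω t)))
        = fun ω => Real.cos c * (∫ θ in (0:ℝ)..(2*Real.pi), Real.cos θ * f θ ω t)
          + Real.sin c * (∫ θ in (0:ℝ)..(2*Real.pi), Real.sin θ * f θ ω t) from funext hptG]
    rw [integral_add (hAi.const_mul _) (hBi.const_mul _),
      integral_const_mul, integral_const_mul, hAeq, hBeq]
    linear_combination R t * (Real.sin_sq_add_cos_sq c)
  -- finish
  have hs3 : Real.sqrt 3 ^ 2 = 3 := Real.sq_sqrt (by norm_num)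
  have hs_pos : 0 < Real.sqrt 3 := Real.sqrt_pos.2 (by norm_num)
  have hs_lt : Real.sqrt 3 < 2 := by nlinarith
  have hbridge : Real.sqrt 3 * (∫ ω, ∫ θ in (c - Real.pi/6)..(c + Real.pi/6), f θ ω t)
      + Real.sqrt 3 * (∫ ω, ∫ θ in (c + Real.pi/6)..(c + 5*Real.pi/6), f θ ω t)
      + Real.sqrt 3 * (∫ ω, ∫ θ in (c + 5*Real.pi/6)..(c + 7*Real.pi/6), f θ ω t)
      + Real.sqrt 3 * (∫ ω, ∫ θ in (c + 7*Real.pi/6)..(c - Real.pi/6 + 2*Real.pi), f θ ω t)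
      = Real.sqrt 3 := by
    linear_combination Real.sqrt 3 * hMsum
  have e1 : c - Real.pi/2 + Real.pi/3 = c - Real.pi/6 := by ring
  have e2 : c + Real.pi/2 - Real.pi/3 = c + Real.pi/6 := by ring
  have e3 : c + Real.pi/2 + Real.pi/3 = c + 5*Real.pi/6 := by ring
  have e4 : c + 3*Real.pi/2 - Real.pi/3 = c + 7*Real.pi/6 := by ring
  simp only [massPlus, massMinus, ← hc]
  rw [e1, e2, e3, e4]
  constructor
  · rw [div_le_iff₀ (by linarith)]
    linarith
  · rw [le_div_iff₀ (by positivity)]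
    linarith

/-- under the framework (ℋ1)–(ℋ3), for all `t ≥ 0`,
`(2R(t) − √3 + 2√3 ℳ(L_{π/3}^-(t)))/(2 − √3) ≤ ℳ(L_{π/3}^+(t))
  ≤ (2R(t) + √3 + (2 − √3) ℳ(L_{π/3}^-(t)))/(2√3)`. -/
theorem stmt_18
    (K M : ℝ) (hK : 0 < K)
    (f : ℝ → ℝ → ℝ → ℝ) (g : ℝ → ℝ) (R φ : ℝ → ℝ)
    (hreg : ContDiff ℝ 1 (fun p : ℝ × ℝ × ℝ => f p.1 p.2.1 p.2.2))
    (hper : ∀ θ ω t, f (θ + 2 * Real.pi) ω t = f θ ω t)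
    (hpos : ∀ θ ω t, 0 ≤ f θ ω t)
    (hprob : ∀ t, (∫ ω : ℝ, ∫ θ in (0 : ℝ)..(2 * Real.pi), f θ ω t) = 1)
    (hgdef : ∀ ω t, (∫ θ in (0 : ℝ)..(2 * Real.pi), f θ ω t) = g ω)
    (hPDE : ∀ θ ω t,
      deriv (fun s => f θ ω s) t +
        deriv (fun x =>
          (ω - K * ∫ ω' : ℝ, ∫ y in (0 : ℝ)..(2 * Real.pi), Real.sin (x - y) * f y ω' t)
            * f x ω t) θ = 0)
    (hRnn : ∀ t, 0 ≤ R t)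
    (hRcos : ∀ t, R t * Real.cos (φ t)
      = ∫ ω : ℝ, ∫ θ in (0 : ℝ)..(2 * Real.pi), Real.cos θ * f θ ω t)
    (hRsin : ∀ t, R t * Real.sin (φ t)
      = ∫ ω : ℝ, ∫ θ in (0 : ℝ)..(2 * Real.pi), Real.sin θ * f θ ω t)
    -- (ℋ1): R0 > 0 and supp g ⊆ [−M, M]
    (hR0 : 0 < R 0)
    (hsupp : ∀ ω, ω ∉ Set.Icc (-M) M → g ω = 0)
    -- (ℋ2): smallness of μ and largeness of K
    (μ : ℝ) (hμ : 0 < μ)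
    (hH2a : 1 / 2 > 2 * M / (K * R 0) + 4 * M / (K * (R 0) ^ 2)
      + (2 * Real.sqrt 2 / (R 0 * Real.sqrt (R 0))) * Real.sqrt (M / K + μ))
    (hH2b : K ^ 2 * μ > 2 * M ^ 2 / (R 0) ^ 2 - 3 * M ^ 2 / (2 * R 0))
    (hH2c : K > max (64 * M / Real.sqrt 3)
      (64 * Real.sqrt 3 * M / (3 - (Real.sqrt 3 - 2 * R 0) ^ 2)))
    -- (ℋ3): γ ∈ (π/3, π/2) and smallness of E1, E2, E3 (with R̲ = R0/2)
    (γ E1 E2 E3 a b : ℝ)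
    (hγ1 : Real.pi / 3 < γ) (hγ2 : γ < Real.pi / 2)
    (hE1 : E1 = (Real.sin γ / (Real.cos γ) ^ 2) * (M / (K * (R 0 / 2)))
      + (1 - Real.sin γ) / 2)
    (hE2 : E2 = 1 - Real.sin γ
      + (1 + Real.sin γ) * (M / (K * (R 0 / 2) * (Real.cos γ) ^ 2))
      + (Real.sin γ / (Real.cos γ) ^ 2) * (M / (K * (R 0 / 2))))
    (ha : a = ((R 0 / 2) / 3) * K * μ
      - (M ^ 2 / (6 * (R 0 / 2) * K) - M ^ 2 / (4 * K)))
    (hb : b = M ^ 2 / (4 * K) + M ^ 2 / (2 * (R 0 / 2) * K))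
    (hE3 : E3 = |((R 0 / 2) * μ / 12) * (b / a)
      + (1 / (4 * K)) * (M ^ 2 / (6 * (R 0 / 2) * K) - M ^ 2 / (4 * K)) * (1 - b / a)
      + (b / (4 * K)) * Real.log (a / b)|)
    (hH3a : R 0 - 2 * E1 - E2 > R 0 / 2)
    (hH3b : μ * R 0 / 24 > 2 * E1 + E2 + E3)
    : ∀ t, 0 ≤ t →
      (2 * R t - Real.sqrt 3 + 2 * Real.sqrt 3 * massMinus f φ (Real.pi / 3) t)
          / (2 - Real.sqrt 3)
        ≤ massPlus f φ (Real.pi / 3) t ∧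
      massPlus f φ (Real.pi / 3) t
        ≤ (2 * R t + Real.sqrt 3 + (2 - Real.sqrt 3) * massMinus f φ (Real.pi / 3) t)
          / (2 * Real.sqrt 3) := by
  intro t _
  exact core f g R φ M hreg hper hpos hprob hgdef hRcos hRsin hsupp t
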